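/- Let m ≥ 1 be a positive integer and let A = ℤ[1/m] be the subring of ℚ generated by 1/m. Let R be a unital ring and suppose there are unital ring homomorphisms g : R → A and h : A → R with g ∘ h = id_A, and that the kernel I of g is finite. Then the set of one-generated unital subrings of R is finite, and its cardinality is at most N·|I|, where N is the number of one-generated unital subrings of A. -/

import Mathlib

lemma pow_mul_mem_int (m : ℕ) (hm : 1 ≤ m) (q : ℚ)
    (hq : q ∈ Subring.closure {(1 / (m : ℚ) : ℚ)}) :
    ∃ (e : ℕ) (z : ℤ), (m : ℚ) ^ e * q = z := by
  have hm0 : (m : ℚ) ≠ 0 := by positivity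
  induction hq using Subring.closure_induction with
  | mem x hx =>
    refine ⟨1, 1, ?_⟩
    simp only [Set.mem_singleton_iff] at hx
    subst hx
    field_simp
    norm_num
  | zero => exact ⟨0, 0, by simp⟩
  | one => exact ⟨0, 1, by simp⟩
  | add x y hx hy ihx ihy =>
    obtain ⟨e1, z1, h1⟩ := ihx
    obtain ⟨e2, z2, h2⟩ := ihy
    refine ⟨e1 + e2, (m:ℤ)^e2 * z1 + (m:ℤ)^e1 * z2, ?_⟩
    push_cast
    rw [mul_add, show (m:ℚ)^(e1+e2) * x = (m:ℚ)^e2 * ((m:ℚ)^e1 * x) by ring,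
        show (m:ℚ)^(e1+e2) * y = (m:ℚ)^e1 * ((m:ℚ)^e2 * y) by ring, h1, h2]
  | neg x hx ihx =>
    obtain ⟨e, z, h1⟩ := ihx
    exact ⟨e, -z, by push_cast; rw [mul_neg, h1]⟩
  | mul x y hx hy ihx ihy =>
    obtain ⟨e1, z1, h1⟩ := ihx
    obtain ⟨e2, z2, h2⟩ := ihy
    refine ⟨e1 + e2, z1 * z2, ?_⟩
    push_cast
    rw [show (m:ℚ)^(e1+e2) * (x*y) = ((m:ℚ)^e1 * x) * ((m:ℚ)^e2 * y) by ring, h1, h2]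


lemma h_g_mem (m : ℕ) (hm : 1 ≤ m) (R : Type*) [Ring R]
    (g : R →+* ↥(Subring.closure {(1 / (m : ℚ) : ℚ)}))
    (h : ↥(Subring.closure {(1 / (m : ℚ) : ℚ)}) →+* R)
    (hI : (RingHom.ker g : Set R).Finite) (a : R) :
    h (g a) ∈ Subring.closure {a} := by
  have hm0 : (m : ℚ) ≠ 0 := by positivity
  set A := ↥(Subring.closure {(1 / (m : ℚ) : ℚ)}) with hA
  set b : A := g a with hb
  obtain ⟨e, z, hez⟩ := pow_mul_mem_int m hm (b : ℚ) b.2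
  have hbA : (m : A) ^ e * b = (z : A) := by
    apply Subtype.ext
    exact hez
  -- the element u = h (1/m) is a two-sided inverse of m in R
  set c : A := ⟨1 / (m : ℚ), Subring.subset_closure rfl⟩ with hc
  have hmc : (m : A) * c = 1 := by
    apply Subtype.ext
    push_cast
    show (m : ℚ) * (1 / (m : ℚ)) = 1
    field_simp
  set u : R := h c with hu
  have hum : (m : R) * u = 1 := by
    rw [hu, ← map_natCast h m, ← map_mul, hmc, map_one]
  have hcomm : Commute u ((m : R)) := (Nat.cast_commute m u).symm
  have hue : u ^ e * (m : R) ^ e = 1 := by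
    rw [← hcomm.mul_pow, hcomm.eq, hum, one_pow]
  have hcan : ∀ x y : R, (m : R) ^ e * x = (m : R) ^ e * y → x = y := by
    intro x y hxy
    calc x = u ^ e * (m : R) ^ e * x := by rw [hue, one_mul]
    _ = u ^ e * ((m : R) ^ e * x) := by rw [mul_assoc]
    _ = u ^ e * ((m : R) ^ e * y) := by rw [hxy]
    _ = u ^ e * (m : R) ^ e * y := by rw [mul_assoc]
    _ = y := by rw [hue, one_mul]
  set δ : R := (m : R) ^ e * a - (z : R) with hδ
  have hδker : δ ∈ RingHom.ker g := by
    rw [RingHom.mem_ker, hδ, map_sub, map_mul, map_pow, map_natCast, map_intCast, ← hb, hbA,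
      sub_self]
  -- multiplication by m^e is an injective self-map of the finite kernel
  have hFin : Finite (RingHom.ker g) := hI.to_subtype
  set F : RingHom.ker g → RingHom.ker g := fun x =>
    ⟨(m : R) ^ e * (x : R), by
      rw [RingHom.mem_ker, map_mul, map_pow, map_natCast]
      rw [show g (x : R) = 0 from x.2]
      rw [mul_zero]⟩ with hF
  have hFinj : Function.Injective F := by
    intro x y hxy
    have := congrArg Subtype.val hxy
    exact Subtype.ext (hcan _ _ this)
  have hFval : ∀ (t : ℕ) (x : RingHom.ker g), ((F^[t] x : RingHom.ker g) : R)
      = (m : R) ^ (e * t) * (x : R) := by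
    intro t
    induction t with
    | zero => intro x; simp
    | succ t ih =>
      intro x
      rw [Function.iterate_succ_apply, ih, hF]
      show (m : R) ^ (e * t) * ((m : R) ^ e * (x : R)) = _
      rw [← mul_assoc, ← pow_add]
      ring_nf
  set δ' : RingHom.ker g := ⟨δ, hδker⟩ with hδ'
  obtain ⟨i, j, hij, hfij⟩ : ∃ i j : ℕ, i ≠ j ∧ F^[i] δ' = F^[j] δ' := by
    obtain ⟨i, j, hij, hfij⟩ := Finite.exists_ne_map_eq_of_infinite (fun n : ℕ => F^[n] δ')
    exact ⟨i, j, hij, hfij⟩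
  wlog hlt : i < j generalizing i j
  · exact this j i hij.symm hfij.symm (by omega)
  obtain ⟨t, ht, hδt⟩ : ∃ t : ℕ, 1 ≤ t ∧ (m : R) ^ (e * t) * δ = δ := by
    refine ⟨j - i, by omega, ?_⟩
    clear hm0
    have : F^[i] (F^[j-i] δ') = F^[i] δ' := by
      rw [← Function.iterate_add_apply, show i + (j - i) = j by omega, hfij]
    have h2 := (hFinj.iterate i) this
    have := congrArg Subtype.val h2
    rwa [hFval] at this
  -- h b = a - m^(e*(t-1)) * δ
  have h1 : (m : R) ^ e * h b = (z : R) := by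
    rw [← map_natCast h m, ← map_pow, ← map_mul, hbA, map_intCast]
  obtain ⟨s, rfl⟩ : ∃ s, t = s + 1 := ⟨t - 1, by omega⟩
  have key : a - h b = (m : R) ^ (e * s) * δ := by
    apply hcan
    rw [← mul_assoc, ← pow_add, show e + e * s = e * (s + 1) by ring]
    rw [hδt, mul_sub, h1, hδ]
  have hδS : δ ∈ Subring.closure {a} := by
    refine sub_mem (mul_mem (pow_mem (natCast_mem _ m) e) (Subring.subset_closure rfl)) ?_
    exact intCast_mem _ z
  have hmem : a - h b ∈ Subring.closure {a} := by
    rw [key]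
    exact mul_mem (pow_mem (natCast_mem _ m) _) hδS
  have heq : h b = a - (a - h b) := (sub_sub_cancel a (h b)).symm
  rw [heq]
  exact sub_mem (Subring.subset_closure rfl) hmem


lemma subring_eq_closure_inv_primes (m : ℕ) (hm : 1 ≤ m) (C : Subring ℚ)
    (hC : C ≤ Subring.closure {(1 / (m : ℚ) : ℚ)}) :
    C = Subring.closure ({q : ℚ | ∃ p : ℕ, p.Prime ∧ p ∣ m ∧ q = 1 / (p : ℚ)} ∩ C) := by
  set genset := {q : ℚ | ∃ p : ℕ, p.Prime ∧ p ∣ m ∧ q = 1 / (p : ℚ)} with hgen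
  have aux : ∀ n : ℕ, 0 < n → (∀ p : ℕ, p.Prime → p ∣ n → p ∣ m) →
      (1 / (n : ℚ)) ∈ C → (1 / (n : ℚ)) ∈ Subring.closure (genset ∩ C) := by
    intro n
    induction n using Nat.strong_induction_on with
    | _ n ih =>
      intro hn hpm hnC
      rcases eq_or_lt_of_le (show 1 ≤ n from hn) with h1 | h1
      · rw [← h1]
        simpa using one_mem (Subring.closure (genset ∩ (C : Set ℚ)))
      obtain ⟨p, hp, hpn⟩ := Nat.exists_prime_and_dvd (by omega : n ≠ 1)
      obtain ⟨k, rfl⟩ := hpn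
      have hp0 : (p : ℚ) ≠ 0 := by exact_mod_cast hp.pos.ne'
      have hk0 : 0 < k := Nat.pos_of_ne_zero (by rintro rfl; simp at hn)
      have hk0' : (k : ℚ) ≠ 0 := by exact_mod_cast hk0.ne'
      have h1p : (1 / (p : ℚ)) ∈ C := by
        have heq : (1 / (p : ℚ)) = (k : ℚ) * (1 / ((p * k : ℕ) : ℚ)) := by
          push_cast
          field_simp
        rw [heq]
        exact mul_mem (natCast_mem C k) hnC
      have h1k : (1 / (k : ℚ)) ∈ C := by
        have heq : (1 / (k : ℚ)) = (p : ℚ) * (1 / ((p * k : ℕ) : ℚ)) := by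
          push_cast
          field_simp
        rw [heq]
        exact mul_mem (natCast_mem C p) hnC
      have hklt : k < p * k := by
        have := hp.two_le
        nlinarith
      have hkcl : (1 / (k : ℚ)) ∈ Subring.closure (genset ∩ C) :=
        ih k hklt hk0 (fun q hq hqk => hpm q hq (hqk.mul_left p)) h1k
      have hpcl : (1 / (p : ℚ)) ∈ Subring.closure (genset ∩ C) :=
        Subring.subset_closure ⟨⟨p, hp, hpm p hp ⟨k, rfl⟩, rfl⟩, h1p⟩
      have heq : (1 / ((p * k : ℕ) : ℚ)) = (1 / (p : ℚ)) * (1 / (k : ℚ)) := by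
        push_cast
        rw [one_div_mul_one_div]
      rw [heq]
      exact mul_mem hpcl hkcl
  refine le_antisymm ?_ (Subring.closure_le.mpr Set.inter_subset_right)
  intro b hb
  have hbm := hC hb
  obtain ⟨e, z, hez⟩ := pow_mul_mem_int m hm b hbm
  have hm0 : (m : ℚ) ≠ 0 := by positivity
  have hden : b.den ∣ m ^ e := by
    have hb' : b = (z : ℚ) / ((m : ℚ)) ^ e := by
      rw [eq_div_iff (pow_ne_zero e hm0), mul_comm]
      exact hez
    have : b = Rat.divInt z ((m : ℤ) ^ e) := by
      rw [Rat.divInt_eq_div, hb']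
      push_cast
      ring
    have hd := Rat.den_dvd z ((m : ℤ) ^ e)
    rw [← this] at hd
    have : ((b.den : ℤ)) ∣ ((m ^ e : ℕ) : ℤ) := by
      push_cast
      exact_mod_cast hd
    exact_mod_cast this
  have hdenC : (1 / (b.den : ℚ)) ∈ C := by
    have hcop : IsCoprime (b.num) (b.den : ℤ) := by
      rw [Int.isCoprime_iff_gcd_eq_one]
      exact b.reduced
    obtain ⟨u, v, huv⟩ := hcop
    have hden0 : (b.den : ℚ) ≠ 0 := by exact_mod_cast b.den_nz
    have hbden : b * (b.den : ℚ) = (b.num : ℚ) := by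
      nth_rewrite 1 [← Rat.num_div_den b]
      rw [div_mul_cancel₀ _ hden0]
    have heq : (1 / (b.den : ℚ)) = (u : ℚ) * b + (v : ℚ) := by
      rw [div_eq_iff hden0, add_mul, mul_assoc, hbden]
      have h2 : ((u * b.num + v * b.den : ℤ) : ℚ) = 1 := by exact_mod_cast huv
      push_cast at h2
      linarith [h2]
    rw [heq]
    exact add_mem (mul_mem (intCast_mem C u) hb) (intCast_mem C v)
  have hdcl : (1 / (b.den : ℚ)) ∈ Subring.closure (genset ∩ C) :=
    aux b.den b.pos (fun p hp hpd => hp.dvd_of_dvd_pow (hpd.trans hden)) hdenC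
  have heq : b = (b.num : ℚ) * (1 / (b.den : ℚ)) := by
    rw [mul_one_div, Rat.num_div_den]
  rw [heq]
  exact mul_mem (intCast_mem _ b.num) hdcl

lemma finite_subring_A (m : ℕ) (hm : 1 ≤ m) :
    Finite (Subring ↥(Subring.closure {(1 / (m : ℚ) : ℚ)})) := by
  set A := ↥(Subring.closure {(1 / (m : ℚ) : ℚ)}) with hA
  set ι : A →+* ℚ := (Subring.closure {(1 / (m : ℚ) : ℚ)}).subtype with hι
  have hιinj : Function.Injective ι := Subtype.val_injective
  have hmap_le : ∀ B : Subring A, B.map ι ≤ Subring.closure {(1 / (m : ℚ) : ℚ)} := by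
    rintro B x ⟨y, hy, rfl⟩
    exact y.2
  apply Finite.of_injective
    (fun B : Subring A => (fun p : ↥m.primeFactors => (1 / ((p : ℕ) : ℚ)) ∈ B.map ι))
  intro B B' hBB'
  have hsets : {q : ℚ | ∃ p : ℕ, p.Prime ∧ p ∣ m ∧ q = 1 / (p : ℚ)} ∩ (B.map ι)
      = {q : ℚ | ∃ p : ℕ, p.Prime ∧ p ∣ m ∧ q = 1 / (p : ℚ)} ∩ (B'.map ι) := by
    ext q
    constructor
    · rintro ⟨⟨p, hp, hpm', rfl⟩, hq⟩
      refine ⟨⟨p, hp, hpm', rfl⟩, ?_⟩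
      have hmem : p ∈ m.primeFactors := Nat.mem_primeFactors.mpr ⟨hp, hpm', by omega⟩
      have hiff := iff_of_eq (congrFun hBB' ⟨p, hmem⟩)
      exact hiff.mp hq
    · rintro ⟨⟨p, hp, hpm', rfl⟩, hq⟩
      refine ⟨⟨p, hp, hpm', rfl⟩, ?_⟩
      have hmem : p ∈ m.primeFactors := Nat.mem_primeFactors.mpr ⟨hp, hpm', by omega⟩
      have hiff := iff_of_eq (congrFun hBB' ⟨p, hmem⟩)
      exact hiff.mpr hq
  have hmaps : B.map ι = B'.map ι := by
    rw [subring_eq_closure_inv_primes m hm (B.map ι) (hmap_le B),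
      subring_eq_closure_inv_primes m hm (B'.map ι) (hmap_le B'), hsets]
  have := congrArg (Subring.comap ι) hmaps
  rwa [Subring.comap_map_eq_self_of_injective hιinj,
    Subring.comap_map_eq_self_of_injective hιinj] at this


lemma closure_eq_pair (m : ℕ) (hm : 1 ≤ m) (R : Type*) [Ring R]
    (g : R →+* ↥(Subring.closure {(1 / (m : ℚ) : ℚ)}))
    (h : ↥(Subring.closure {(1 / (m : ℚ) : ℚ)}) →+* R)
    (hI : (RingHom.ker g : Set R).Finite) (a : R) :
    Subring.closure {a} =
      Subring.closure ((h '' (Subring.closure {g a} : Set _)) ∪ {a - h (g a)}) := by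
  apply le_antisymm
  · rw [Subring.closure_le, Set.singleton_subset_iff]
    have hmem := add_mem
      (Subring.subset_closure (s := (h '' (Subring.closure {g a} : Set _)) ∪ {a - h (g a)})
        (Or.inl ⟨g a, Subring.subset_closure rfl, rfl⟩))
      (Subring.subset_closure (s := (h '' (Subring.closure {g a} : Set _)) ∪ {a - h (g a)})
        (Or.inr rfl))
    have heq : h (g a) + (a - h (g a)) = a := by abel
    rwa [heq] at hmem
  · rw [Subring.closure_le]
    rintro x (⟨y, hy, rfl⟩ | hx)
    · have hmap : Subring.closure {g a} = (Subring.closure {a}).map g := by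
        rw [RingHom.map_closure, Set.image_singleton]
      rw [hmap] at hy
      obtain ⟨x', hx', rfl⟩ := hy
      have h1 : h (g x') ∈ Subring.closure {x'} := h_g_mem m hm R g h hI x'
      have h2 : Subring.closure {x'} ≤ Subring.closure {a} := by
        rw [Subring.closure_le, Set.singleton_subset_iff]; exact hx'
      exact h2 h1
    · rw [Set.mem_singleton_iff] at hx
      subst hx
      exact sub_mem (Subring.subset_closure rfl) (h_g_mem m hm R g h hI a)

/-- If `R` is a unital ring together with a split surjection `g : R → ℤ[1/m]`
(split by a unital ring homomorphism `h`) whose kernel `I` is finite, then the set of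
one-generated unital subrings of `R` is finite of cardinality at most `N * |I|`,
where `N` is the number of one-generated unital subrings of `ℤ[1/m]`. -/

theorem stmt_4 (m : ℕ) (hm : 1 ≤ m) (R : Type*) [Ring R]
    (g : R →+* ↥(Subring.closure {(1 / (m : ℚ) : ℚ)}))
    (h : ↥(Subring.closure {(1 / (m : ℚ) : ℚ)}) →+* R)
    (hgh : g.comp h = RingHom.id _)
    (hI : (RingHom.ker g : Set R).Finite) :
    {S : Subring R | ∃ a : R, S = Subring.closure {a}}.Finite ∧
    Nat.card {S : Subring R | ∃ a : R, S = Subring.closure {a}} ≤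
      Nat.card {S : Subring ↥(Subring.closure {(1 / (m : ℚ) : ℚ)}) |
          ∃ a, S = Subring.closure {a}} * Nat.card (RingHom.ker g) := by
  haveI hFinSub : Finite (Subring ↥(Subring.closure {(1 / (m : ℚ) : ℚ)})) :=
    finite_subring_A m hm
  haveI hFinK : Finite (RingHom.ker g) := hI.to_subtype
  set SA := {S : Subring ↥(Subring.closure {(1 / (m : ℚ) : ℚ)}) |
    ∃ a, S = Subring.closure {a}} with hSA
  set SR := {S : Subring R | ∃ a : R, S = Subring.closure {a}} with hSR
  set Φ : ↥SA × ↥(RingHom.ker g) → Subring R := fun Bε =>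
    Subring.closure ((h '' (SetLike.coe Bε.1.val)) ∪ {(Bε.2 : R)}) with hΦ
  have hsub : SR ⊆ Set.range Φ := by
    rintro S ⟨a, rfl⟩
    refine ⟨⟨⟨Subring.closure {g a}, ⟨g a, rfl⟩⟩, ⟨a - h (g a), ?_⟩⟩, ?_⟩
    · rw [RingHom.mem_ker, map_sub]
      have hghx : g (h (g a)) = g a := DFunLike.congr_fun hgh (g a)
      rw [hghx, sub_self]
    · exact (closure_eq_pair m hm R g h hI a).symm
  constructor
  · exact (Set.finite_range Φ).subset hsub
  · calc Nat.card SR ≤ Nat.card (Set.range Φ) := Nat.card_mono (Set.finite_range Φ) hsub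
    _ ≤ Nat.card (↥SA × ↥(RingHom.ker g)) :=
        Nat.card_le_card_of_surjective (Set.rangeFactorization Φ) Set.rangeFactorization_surjective
    _ = Nat.card SA * Nat.card (RingHom.ker g) := Nat.card_prod _ _
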